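/- Let G be a finite group and let H_1, …, H_k be core-free subgroups of G. Let x_1, …, x_t be a set of representatives of the conjugacy classes of elements of prime order in G. If Σ_{i=1}^t |x_i^G| · ∏_{j=1}^k fpr(x_i, G/H_j) < 1, then the tuple (H_1, …, H_k) is regular, i.e., there exist g_1, …, g_k ∈ G with ⋂_{j=1}^k H_j^{g_j} = 1. -/

import Mathlib

/-- `conjSub H g` is the conjugate subgroup `H ^ g = g⁻¹ H g`. -/
def conjSub {G : Type*} [Group G] (H : Subgroup G) (g : G) : Subgroup G :=
  Subgroup.comap (MulAut.conj g).toMonoidHom H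

/-- The fixed point ratio of `x` in the action of `G` on the coset space `G/H`. -/
noncomputable def fpr (G : Type*) [Group G] (H : Subgroup G) (x : G) : ℝ :=
  (Nat.card (MulAction.fixedBy (G ⧸ H) x) : ℝ) / (Nat.card (G ⧸ H) : ℝ)

open MulAction

lemma fix_pi {G : Type*} [Group G] {k : ℕ} (α : Fin k → Type*) [∀ j, MulAction G (α j)]
    (g : G) : Nat.card (fixedBy (∀ j, α j) g) = ∏ j, Nat.card (fixedBy (α j) g) := by
  rw [← Nat.card_pi]
  exact Nat.card_eq_of_bijective
    (fun ω j => ⟨ω.1 j, congrFun ω.2 j⟩)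
    ⟨fun a b h => Subtype.ext (funext fun j => congrArg Subtype.val (congrFun h j)),
     fun f => ⟨⟨fun j => (f j).1, funext fun j => (f j).2⟩, rfl⟩⟩

lemma fix_conj_card {G : Type*} [Group G] (α : Type*) [MulAction G α]
    {a b : G} (h : IsConj a b) : Nat.card (fixedBy α a) = Nat.card (fixedBy α b) := by
  obtain ⟨c, hc⟩ := isConj_iff.mp h
  rw [← hc, ← smul_fixedBy, Set.natCard_smul_set]

/-- If `Σᵢ |xᵢ^G| ∏ⱼ fpr(xᵢ, G/Hⱼ) < 1`, where the `xᵢ` represent the conjugacy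
classes of prime order elements of `G`, then the tuple `(H₁, …, H_k)` is regular. -/
theorem stmt3 {G : Type*} [Group G] [Fintype G] {k t : ℕ}
    (H : Fin k → Subgroup G) (hH : ∀ j, (H j).normalCore = ⊥)
    (x : Fin t → G)
    (hprime : ∀ i, (orderOf (x i)).Prime)
    (hdistinct : ∀ i j, IsConj (x i) (x j) → i = j)
    (hcover : ∀ g : G, (orderOf g).Prime → ∃ i, IsConj (x i) g)
    (hsum : ∑ i, (Nat.card {y : G // IsConj (x i) y} : ℝ) * ∏ j, fpr G (H j) (x i) < 1) :
    ∃ g : Fin k → G, (⨅ j, conjSub (H j) (g j)) = ⊥ := by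
  classical
  by_contra hcon
  push_neg at hcon
  -- every point of the product space is fixed by some prime order element
  have key : ∀ ω : ∀ j, G ⧸ H j, ∃ z : G, (orderOf z).Prime ∧
      ω ∈ fixedBy (∀ j, G ⧸ H j) z := by
    intro ω
    have hne : (⨅ j, conjSub (H j) ((ω j).out)⁻¹) ≠ ⊥ := hcon _
    obtain ⟨y, hyK, hy1⟩ := ((⨅ j, conjSub (H j) ((ω j).out)⁻¹).bot_or_exists_ne_one).resolve_left hne
    have hyfix : y ∈ stabilizer G ω := by
      rw [mem_stabilizer_iff]
      funext j
      have hmem : ((ω j).out)⁻¹ * y * ((ω j).out)⁻¹⁻¹ ∈ H j := by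
        have := (Subgroup.mem_iInf.mp hyK) j
        simpa [conjSub, Subgroup.mem_comap] using this
      rw [inv_inv] at hmem
      calc (y • ω) j = y • ω j := rfl
        _ = y • ((ω j).out : G ⧸ H j) := by rw [QuotientGroup.out_eq']
        _ = ((y * (ω j).out : G) : G ⧸ H j) := MulAction.Quotient.smul_mk (H j) y _
        _ = ω j := by
              conv_rhs => rw [← QuotientGroup.out_eq' (ω j)]
              rw [QuotientGroup.eq]
              simpa [mul_assoc] using (H j).inv_mem hmem
    -- get an element of prime order
    have hord : orderOf y ≠ 0 := (orderOf_pos y).ne'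
    have hord1 : orderOf y ≠ 1 := by simpa [orderOf_eq_one_iff] using hy1
    obtain ⟨p, hp, hpd⟩ := Nat.exists_prime_and_dvd hord1
    refine ⟨y ^ (orderOf y / p), ?_, ?_⟩
    · rw [orderOf_pow_orderOf_div hord hpd]; exact hp
    · have := (stabilizer G ω).pow_mem hyfix (orderOf y / p)
      exact this
  -- choose, for each point, a class index and a conjugate fixing it
  have keyc : ∀ ω : ∀ j, G ⧸ H j, ∃ p : Fin t × G, IsConj (x p.1) p.2 ∧
      ω ∈ fixedBy (∀ j, G ⧸ H j) p.2 := by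
    intro ω
    obtain ⟨z, hz, hfix⟩ := key ω
    obtain ⟨i, hi⟩ := hcover z hz
    exact ⟨(i, z), hi, hfix⟩
  haveI : Fintype (∀ j, G ⧸ H j) := Fintype.ofFinite _
  set Ω := ∀ j, G ⧸ H j with hΩ
  choose pf hf1 hf2 using keyc
  set T : Finset (Fin t × G) := Finset.univ.filter (fun p => IsConj (x p.1) p.2) with hT
  have h1 : Fintype.card Ω = ∑ p ∈ T, (Finset.univ.filter (fun ω => pf ω = p)).card := by
    rw [← Finset.card_univ]
    exact Finset.card_eq_sum_card_fiberwise
      (fun ω _ => Finset.mem_filter.mpr ⟨Finset.mem_univ _, hf1 ω⟩)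
  have h2 : ∀ p ∈ T, (Finset.univ.filter (fun ω => pf ω = p)).card ≤
      Nat.card (fixedBy Ω p.2) := by
    intro p hp
    rw [Nat.card_eq_fintype_card, ← Set.toFinset_card]
    apply Finset.card_le_card
    intro ω hω
    rw [Set.mem_toFinset]
    obtain ⟨-, h⟩ := Finset.mem_filter.mp hω
    exact h ▸ hf2 ω
  have h3 : Fintype.card Ω ≤ ∑ p ∈ T, Nat.card (fixedBy Ω p.2) :=
    h1 ▸ Finset.sum_le_sum h2
  have h4 : ∑ p ∈ T, Nat.card (fixedBy Ω p.2)
      = ∑ i, Nat.card {y : G // IsConj (x i) y} * Nat.card (fixedBy Ω (x i)) := by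
    rw [hT, Finset.sum_filter, Fintype.sum_prod_type]
    refine Finset.sum_congr rfl fun i _ => ?_
    rw [← Finset.sum_filter]
    have hcongr : ∀ y ∈ Finset.univ.filter (fun y => IsConj (x i) y),
        Nat.card (fixedBy Ω y) = Nat.card (fixedBy Ω (x i)) := fun y hy =>
      (fix_conj_card Ω (Finset.mem_filter.mp hy).2).symm
    rw [Finset.sum_congr rfl hcongr, Finset.sum_const, smul_eq_mul]
    congr 1
    rw [Nat.card_eq_fintype_card, Fintype.card_subtype]
  have h5 : ∀ i, Nat.card (fixedBy Ω (x i)) = ∏ j, Nat.card (fixedBy (G ⧸ H j) (x i)) :=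
    fun i => fix_pi (fun j => G ⧸ H j) (x i)
  have h6 : (Fintype.card Ω : ℕ) = ∏ j, Nat.card (G ⧸ H j) := by
    rw [← Nat.card_eq_fintype_card, hΩ, Nat.card_pi]
  -- pass to the reals
  have hnat : Fintype.card Ω ≤
      ∑ i, Nat.card {y : G // IsConj (x i) y} * ∏ j, Nat.card (fixedBy (G ⧸ H j) (x i)) := by
    have := h3.trans (le_of_eq h4)
    simpa only [h5] using this
  have hDpos : ∀ j : Fin k, (0:ℝ) < (Nat.card (G ⧸ H j) : ℝ) := by
    intro j
    exact_mod_cast Nat.card_pos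
  have hPpos : (0:ℝ) < ∏ j, (Nat.card (G ⧸ H j) : ℝ) :=
    Finset.prod_pos fun j _ => hDpos j
  have hmul := mul_lt_mul_of_pos_right hsum hPpos
  rw [one_mul, Finset.sum_mul] at hmul
  have hre : ∀ i, ((Nat.card {y : G // IsConj (x i) y} : ℝ) * ∏ j, fpr G (H j) (x i)) *
      ∏ j, (Nat.card (G ⧸ H j) : ℝ)
      = (Nat.card {y : G // IsConj (x i) y} : ℝ) *
        ∏ j, (Nat.card (fixedBy (G ⧸ H j) (x i)) : ℝ) := by
    intro i
    rw [mul_assoc, ← Finset.prod_mul_distrib]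
    congr 1
    refine Finset.prod_congr rfl fun j _ => ?_
    rw [fpr, div_mul_cancel₀]
    exact (hDpos j).ne'
  rw [Finset.sum_congr rfl fun i _ => hre i] at hmul
  have hcast : (Fintype.card Ω : ℝ) ≤
      ∑ i, (Nat.card {y : G // IsConj (x i) y} : ℝ) *
        ∏ j, (Nat.card (fixedBy (G ⧸ H j) (x i)) : ℝ) := by
    exact_mod_cast hnat
  have hfin : (Fintype.card Ω : ℝ) = ∏ j, (Nat.card (G ⧸ H j) : ℝ) := by
    exact_mod_cast congrArg (Nat.cast : ℕ → ℝ) h6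
  linarith
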